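/- Let a ∈ ℝ with a ∉ {0, 2, −2, √2, −√2}. Let A₂ := a•1 + S + Sᵀ as a matrix indexed by ZMod 2 and A₄ := a•1 + S + Sᵀ as a matrix indexed by ZMod 4. Then A₂ and A₄ are invertible, the diagonal entries (A₂⁻¹) 0 0 and (A₄⁻¹) 0 0 are nonzero, and the equality (∑_{q : ZMod 2} ((A₂⁻¹) 0 q)³) / ((A₂⁻¹) 0 0)² = (∑_{q : ZMod 4} ((A₄⁻¹) 0 q)³) / ((A₄⁻¹) 0 0)² holds if and only if a = −1. -/

import Mathlib

open Matrix

/-- The cyclic shift permutation matrix `S p q = 1` if `q = p + 1`, else `0`. -/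
noncomputable def shiftMat (n : ℕ) : Matrix (ZMod n) (ZMod n) ℝ :=
  fun p q => if q = p + 1 then 1 else 0

/-- The symmetric circulant matrix `A(a) = a•1 + S + Sᵀ`. -/
noncomputable def Amat (n : ℕ) (a : ℝ) : Matrix (ZMod n) (ZMod n) ℝ :=
  a • 1 + shiftMat n + (shiftMat n)ᵀ

noncomputable def C2mat (a : ℝ) : Matrix (ZMod 2) (ZMod 2) ℝ :=
  fun p q => if p = q then a else -2

noncomputable def C4mat (a : ℝ) : Matrix (ZMod 4) (ZMod 4) ℝ :=
  fun p q => if p = q then a^2-2 else if q = p + 2 then 2 else -a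

lemma AC2 (a : ℝ) : Amat 2 a * C2mat a = (a^2-4) • 1 := by
  have key : ∀ p : ZMod 2, p = 0 ∨ p = 1 := by decide
  ext p q
  rw [Matrix.mul_apply]
  rw [show (Finset.univ : Finset (ZMod 2)) = {0, 1} from by decide, Finset.sum_pair (by decide)]
  rcases key p with hp|hp <;> rcases key q with hq|hq <;> subst hp <;> subst hq <;>
    · simp only [Amat, C2mat, shiftMat, Matrix.one_apply, Matrix.add_apply, Matrix.smul_apply,
        Matrix.transpose_apply, smul_eq_mul,
      show (((0:ZMod 2) = 0) = True) from by decide,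
      show (((0:ZMod 2) = 1) = False) from by decide,
      show (((0:ZMod 2) = 0 + 1) = False) from by decide,
      show (((1:ZMod 2) = 0 + 1) = True) from by decide,
      show (((1:ZMod 2) = 0) = False) from by decide,
      show (((1:ZMod 2) = 1) = True) from by decide,
      show (((0:ZMod 2) = 1 + 1) = True) from by decide,
      show (((1:ZMod 2) = 1 + 1) = False) from by decide
,
      if_true, if_false, ite_true, ite_false]
      ring

lemma AC4 (a : ℝ) : Amat 4 a * C4mat a = (a*(a^2-4)) • 1 := by
  have key : ∀ p : ZMod 4, p = 0 ∨ p = 1 ∨ p = 2 ∨ p = 3 := by decide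
  ext p q
  rw [Matrix.mul_apply]
  rw [show (Finset.univ : Finset (ZMod 4)) = {0, 1, 2, 3} from by decide, Finset.sum_insert (by decide),
    Finset.sum_insert (by decide), Finset.sum_insert (by decide), Finset.sum_singleton]
  rcases key p with hp|hp|hp|hp <;> rcases key q with hq|hq|hq|hq <;> subst hp <;> subst hq <;>
    · simp only [Amat, C4mat, shiftMat, Matrix.one_apply, Matrix.add_apply, Matrix.smul_apply,
        Matrix.transpose_apply, smul_eq_mul,
      show (((0:ZMod 4) = 0) = True) from by decide,
      show (((0:ZMod 4) = 1) = False) from by decide,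
      show (((0:ZMod 4) = 2) = False) from by decide,
      show (((0:ZMod 4) = 3) = False) from by decide,
      show (((0:ZMod 4) = 0 + 1) = False) from by decide,
      show (((1:ZMod 4) = 0 + 1) = True) from by decide,
      show (((2:ZMod 4) = 0 + 1) = False) from by decide,
      show (((3:ZMod 4) = 0 + 1) = False) from by decide,
      show (((0:ZMod 4) = 0 + 2) = False) from by decide,
      show (((1:ZMod 4) = 0 + 2) = False) from by decide,
      show (((2:ZMod 4) = 0 + 2) = True) from by decide,
      show (((3:ZMod 4) = 0 + 2) = False) from by decide,
      show (((1:ZMod 4) = 0) = False) from by decide,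
      show (((1:ZMod 4) = 1) = True) from by decide,
      show (((1:ZMod 4) = 2) = False) from by decide,
      show (((1:ZMod 4) = 3) = False) from by decide,
      show (((0:ZMod 4) = 1 + 1) = False) from by decide,
      show (((1:ZMod 4) = 1 + 1) = False) from by decide,
      show (((2:ZMod 4) = 1 + 1) = True) from by decide,
      show (((3:ZMod 4) = 1 + 1) = False) from by decide,
      show (((0:ZMod 4) = 1 + 2) = False) from by decide,
      show (((1:ZMod 4) = 1 + 2) = False) from by decide,
      show (((2:ZMod 4) = 1 + 2) = False) from by decide,
      show (((3:ZMod 4) = 1 + 2) = True) from by decide,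
      show (((2:ZMod 4) = 0) = False) from by decide,
      show (((2:ZMod 4) = 1) = False) from by decide,
      show (((2:ZMod 4) = 2) = True) from by decide,
      show (((2:ZMod 4) = 3) = False) from by decide,
      show (((0:ZMod 4) = 2 + 1) = False) from by decide,
      show (((1:ZMod 4) = 2 + 1) = False) from by decide,
      show (((2:ZMod 4) = 2 + 1) = False) from by decide,
      show (((3:ZMod 4) = 2 + 1) = True) from by decide,
      show (((0:ZMod 4) = 2 + 2) = True) from by decide,
      show (((1:ZMod 4) = 2 + 2) = False) from by decide,
      show (((2:ZMod 4) = 2 + 2) = False) from by decide,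
      show (((3:ZMod 4) = 2 + 2) = False) from by decide,
      show (((3:ZMod 4) = 0) = False) from by decide,
      show (((3:ZMod 4) = 1) = False) from by decide,
      show (((3:ZMod 4) = 2) = False) from by decide,
      show (((3:ZMod 4) = 3) = True) from by decide,
      show (((0:ZMod 4) = 3 + 1) = True) from by decide,
      show (((1:ZMod 4) = 3 + 1) = False) from by decide,
      show (((2:ZMod 4) = 3 + 1) = False) from by decide,
      show (((3:ZMod 4) = 3 + 1) = False) from by decide,
      show (((0:ZMod 4) = 3 + 2) = False) from by decide,
      show (((1:ZMod 4) = 3 + 2) = True) from by decide,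
      show (((2:ZMod 4) = 3 + 2) = False) from by decide,
      show (((3:ZMod 4) = 3 + 2) = False) from by decide
,
      if_true, if_false, ite_true, ite_false]
      ring

theorem stmt12 (a : ℝ)
    (ha : a ∉ ({0, 2, -2, Real.sqrt 2, -Real.sqrt 2} : Set ℝ)) :
    IsUnit (Amat 2 a) ∧ IsUnit (Amat 4 a) ∧
    (Amat 2 a)⁻¹ 0 0 ≠ 0 ∧ (Amat 4 a)⁻¹ 0 0 ≠ 0 ∧
    ((∑ q : ZMod 2, ((Amat 2 a)⁻¹ 0 q) ^ 3) / ((Amat 2 a)⁻¹ 0 0) ^ 2 =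
      (∑ q : ZMod 4, ((Amat 4 a)⁻¹ 0 q) ^ 3) / ((Amat 4 a)⁻¹ 0 0) ^ 2 ↔ a = -1) := by
  simp only [Set.mem_insert_iff, Set.mem_singleton_iff, not_or] at ha
  obtain ⟨h0, h2, hm2, hs, hms⟩ := ha
  have hsq2 : a^2 - 2 ≠ 0 := by
    intro h
    have habs : |a| = Real.sqrt 2 := by
      rw [← Real.sqrt_sq_eq_abs]
      congr 1
      linarith
    rcases abs_eq (Real.sqrt_nonneg 2) |>.mp habs with h'|h'
    · exact hs h'
    · exact hms h'
  have hD : a^2 - 4 ≠ 0 := by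
    intro h
    have : (a - 2) * (a + 2) = 0 := by ring_nf; linarith
    rcases mul_eq_zero.mp this with h'|h'
    · exact h2 (by linarith)
    · exact hm2 (by linarith)
  have hE : a * (a^2 - 4) ≠ 0 := mul_ne_zero h0 hD
  -- inverses
  have hB2 : Amat 2 a * ((a^2-4)⁻¹ • C2mat a) = 1 := by
    rw [Matrix.mul_smul, AC2, smul_smul, inv_mul_cancel₀ hD, one_smul]
  have hB4 : Amat 4 a * ((a*(a^2-4))⁻¹ • C4mat a) = 1 := by
    rw [Matrix.mul_smul, AC4, smul_smul, inv_mul_cancel₀ hE, one_smul]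
  have hU2 : IsUnit (Amat 2 a) :=
    (Matrix.isUnit_iff_isUnit_det _).mpr (Matrix.isUnit_det_of_right_inverse hB2)
  have hU4 : IsUnit (Amat 4 a) :=
    (Matrix.isUnit_iff_isUnit_det _).mpr (Matrix.isUnit_det_of_right_inverse hB4)
  have hi2 : (Amat 2 a)⁻¹ = (a^2-4)⁻¹ • C2mat a := Matrix.inv_eq_right_inv hB2
  have hi4 : (Amat 4 a)⁻¹ = (a*(a^2-4))⁻¹ • C4mat a := Matrix.inv_eq_right_inv hB4
  -- entries
  have e00 : (Amat 2 a)⁻¹ 0 0 = a / (a^2-4) := by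
    simp only [hi2, Matrix.smul_apply, C2mat, smul_eq_mul,
      show (((0:ZMod 2) = 0) = True) from by decide, ite_true]
    rw [div_eq_inv_mul]
  have e01 : (Amat 2 a)⁻¹ 0 1 = -2 / (a^2-4) := by
    simp only [hi2, Matrix.smul_apply, C2mat, smul_eq_mul,
      show (((0:ZMod 2) = 1) = False) from by decide, ite_false]
    rw [div_eq_inv_mul]
  have f00 : (Amat 4 a)⁻¹ 0 0 = (a^2-2) / (a*(a^2-4)) := by
    simp only [hi4, Matrix.smul_apply, C4mat, smul_eq_mul,
      show (((0:ZMod 4) = 0) = True) from by decide, ite_true]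
    rw [div_eq_inv_mul]
  have f01 : (Amat 4 a)⁻¹ 0 1 = -a / (a*(a^2-4)) := by
    simp only [hi4, Matrix.smul_apply, C4mat, smul_eq_mul,
      show (((0:ZMod 4) = 1) = False) from by decide,
      show (((1:ZMod 4) = 0 + 2) = False) from by decide, ite_false]
    rw [div_eq_inv_mul]
  have f02 : (Amat 4 a)⁻¹ 0 2 = 2 / (a*(a^2-4)) := by
    simp only [hi4, Matrix.smul_apply, C4mat, smul_eq_mul,
      show (((0:ZMod 4) = 2) = False) from by decide,
      show (((2:ZMod 4) = 0 + 2) = True) from by decide, ite_false, ite_true]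
    rw [div_eq_inv_mul]
  have f03 : (Amat 4 a)⁻¹ 0 3 = -a / (a*(a^2-4)) := by
    simp only [hi4, Matrix.smul_apply, C4mat, smul_eq_mul,
      show (((0:ZMod 4) = 3) = False) from by decide,
      show (((3:ZMod 4) = 0 + 2) = False) from by decide, ite_false]
    rw [div_eq_inv_mul]
  have hd00 : (Amat 2 a)⁻¹ 0 0 ≠ 0 := by
    rw [e00]; exact div_ne_zero h0 hD
  have hd400 : (Amat 4 a)⁻¹ 0 0 ≠ 0 := by
    rw [f00]; exact div_ne_zero hsq2 hE
  refine ⟨hU2, hU4, hd00, hd400, ?_⟩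
  have hsum2 : ∑ q : ZMod 2, ((Amat 2 a)⁻¹ 0 q) ^ 3
      = ((Amat 2 a)⁻¹ 0 0) ^ 3 + ((Amat 2 a)⁻¹ 0 1) ^ 3 := by
    rw [show (Finset.univ : Finset (ZMod 2)) = {0, 1} from by decide, Finset.sum_pair (by decide)]
  have hsum4 : ∑ q : ZMod 4, ((Amat 4 a)⁻¹ 0 q) ^ 3
      = ((Amat 4 a)⁻¹ 0 0) ^ 3 + ((Amat 4 a)⁻¹ 0 1) ^ 3
        + ((Amat 4 a)⁻¹ 0 2) ^ 3 + ((Amat 4 a)⁻¹ 0 3) ^ 3 := by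
    rw [show (Finset.univ : Finset (ZMod 4)) = {0, 1, 2, 3} from by decide, Finset.sum_insert (by decide),
      Finset.sum_insert (by decide), Finset.sum_insert (by decide), Finset.sum_singleton]
    ring
  rw [hsum2, hsum4, e00, e01, f00, f01, f02, f03]
  constructor
  · intro h
    field_simp at h
    have key : (a + 1) * (2 * a^3 * (a^2-4)^5 * (a-2)^3 * (a+2)) = 0 := by
      linear_combination (a^3 * (a^2-4)^5) * h
    rcases mul_eq_zero.mp key with h'|h'
    · linarith
    · exfalso
      have hne : 2 * a^3 * (a^2-4)^5 * (a-2)^3 * (a+2) ≠ 0 := by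
        apply mul_ne_zero
        apply mul_ne_zero
        apply mul_ne_zero
        · exact mul_ne_zero two_ne_zero (pow_ne_zero _ h0)
        · exact pow_ne_zero _ hD
        · exact pow_ne_zero _ (sub_ne_zero.mpr h2)
        · intro hz; exact hm2 (by linarith)
      exact hne h'
  · intro h
    subst h
    norm_num
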